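/- Suppose for every i ∈ {1,…,k} the autoencoder (E_i, D_i) is optimal. For each i define the joint measure Q^{(i)} on 𝒳₁ × ⋯ × 𝒳ₖ as the pushforward of P_{X_i} ⊗ (⊗_{j≠i} P_{N_j}) under the map sending (x, (n_j)_{j≠i}) to the k-tuple whose i-th coordinate is x and whose j-th coordinate, for j ≠ i, is D_j(π^Z(E_i(x)), n_j). Then for every i, Q^{(i)} equals the pushforward of P_Z ⊗ (⊗_{j=1}^k P_{N_j}) under the map (z, (n_1,…,n_k)) ↦ (D_1(z,n_1), …, D_k(z,n_k)); in particular Q^{(1)} = Q^{(2)} = ⋯ = Q^{(k)} (global consistency). -/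

import Mathlib

open MeasureTheory

/-- Splitting a product of a distinguished factor and the remaining factors back into a full
product measure is measure preserving. -/
lemma split_measurePreserving {k : ℕ} (N : Fin k → Type*) [∀ j, MeasurableSpace (N j)]
    (PN : ∀ j, Measure (N j)) [∀ j, IsProbabilityMeasure (PN j)] (i : Fin k) :
    MeasurePreserving
      (fun p : N i × (∀ j : {j : Fin k // j ≠ i}, N j) =>
        fun j : Fin k => if h : j = i then cast (congrArg N h.symm) p.1 else p.2 ⟨j, h⟩)
      ((PN i).prod (Measure.pi fun j : {j : Fin k // j ≠ i} => PN j)) (Measure.pi PN) := by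
  have hmeas : Measurable
      (fun p : N i × (∀ j : {j : Fin k // j ≠ i}, N j) =>
        fun j : Fin k => if h : j = i then cast (congrArg N h.symm) p.1 else p.2 ⟨j, h⟩) := by
    refine measurable_pi_lambda _ fun j => ?_
    by_cases h : j = i
    · subst h; simpa using measurable_fst
    · simpa [h, Function.comp_def] using (measurable_pi_apply (⟨j, h⟩ : {j : Fin k // j ≠ i})).comp measurable_snd
  refine ⟨hmeas, ?_⟩
  refine (Measure.pi_eq (μ := PN) fun s hs => ?_).symm
  rw [Measure.map_apply hmeas (MeasurableSet.univ_pi hs)]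
  have hpre : (fun p : N i × (∀ j : {j : Fin k // j ≠ i}, N j) =>
        fun j : Fin k => if h : j = i then cast (congrArg N h.symm) p.1 else p.2 ⟨j, h⟩) ⁻¹'
      (Set.univ.pi s)
      = (s i) ×ˢ (Set.univ.pi fun j : {j : Fin k // j ≠ i} => s j) := by
    ext p
    simp only [Set.mem_preimage, Set.mem_pi, Set.mem_univ, forall_true_left, Set.mem_prod]
    constructor
    · intro h
      refine ⟨by simpa using h i, fun j => by simpa [j.2] using h j⟩
    · rintro ⟨h1, h2⟩ j
      by_cases hj : j = i
      · subst hj; simpa using h1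
      · simpa [hj] using h2 ⟨j, hj⟩
  rw [hpre, Measure.prod_prod, Measure.pi_pi]
  rw [← Finset.prod_subtype ({i}ᶜ : Finset (Fin k)) (fun x => by simp)
    (fun j => PN j (s j))]
  exact (Fintype.prod_eq_mul_prod_compl i fun j => PN j (s j)).symm

theorem global_consistency {k : ℕ}
    (X : Fin k → Type*) [∀ i, MeasurableSpace (X i)] [∀ i, StandardBorelSpace (X i)]
    (Z : Type*) [MeasurableSpace Z] [StandardBorelSpace Z]
    (N : Fin k → Type*) [∀ i, MeasurableSpace (N i)] [∀ i, StandardBorelSpace (N i)]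
    (PX : ∀ i, Measure (X i)) [∀ i, IsProbabilityMeasure (PX i)]
    (PZ : Measure Z) [IsProbabilityMeasure PZ]
    (PN : ∀ i, Measure (N i)) [∀ i, IsProbabilityMeasure (PN i)]
    (E : ∀ i, X i → Z × N i) (D : ∀ i, Z × N i → X i)
    (hE : ∀ i, Measurable (E i)) (hD : ∀ i, Measurable (D i))
    (hrec : ∀ i, ∀ᵐ x ∂(PX i), D i (E i x) = x)
    (hlat : ∀ i, (PX i).map (E i) = PZ.prod (PN i)) :
    ∀ i : Fin k,
      Measure.map
        (fun p : X i × (∀ j : {j : Fin k // j ≠ i}, N j) =>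
          fun j : Fin k =>
            if h : j = i then cast (congrArg X h.symm) p.1
            else D j ((E i p.1).1, p.2 ⟨j, h⟩))
        ((PX i).prod (Measure.pi fun j : {j : Fin k // j ≠ i} => PN j))
      = Measure.map
          (fun p : Z × (∀ j, N j) => fun j : Fin k => D j (p.1, p.2 j))
          (PZ.prod (Measure.pi fun j => PN j)) := by
  intro i
  set π' : Measure (∀ j : {j : Fin k // j ≠ i}, N j) :=
    Measure.pi fun j : {j : Fin k // j ≠ i} => PN j with hπ'
  -- the "decode on all coordinates" map from the intermediate space
  set G : (Z × N i) × (∀ j : {j : Fin k // j ≠ i}, N j) → ∀ j, X j :=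
    fun p => fun j : Fin k =>
      if h : j = i then cast (congrArg X h.symm) (D i p.1)
      else D j (p.1.1, p.2 ⟨j, h⟩) with hG
  have hGmeas : Measurable G := by
    refine measurable_pi_lambda _ fun j => ?_
    by_cases h : j = i
    · subst h; simpa [hG, Function.comp_def] using (hD j).comp measurable_fst
    · simpa [hG, h, Function.comp_def] using (hD j).comp
        (((measurable_fst.comp measurable_fst).prodMk
          ((measurable_pi_apply (⟨j, h⟩ : {j : Fin k // j ≠ i})).comp measurable_snd)))
  set H : Z × (∀ j, N j) → ∀ j, X j :=
    fun p => fun j : Fin k => D j (p.1, p.2 j) with hH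
  have hHmeas : Measurable H :=
    measurable_pi_lambda _ fun j =>
      (hD j).comp (measurable_fst.prodMk ((measurable_pi_apply j).comp measurable_snd))
  -- the encoding step
  set φ : X i × (∀ j : {j : Fin k // j ≠ i}, N j) → (Z × N i) × (∀ j : {j : Fin k // j ≠ i}, N j) :=
    fun p => (E i p.1, p.2) with hφ
  have hφMP : MeasurePreserving φ ((PX i).prod π') ((PZ.prod (PN i)).prod π') := by
    have h1 : MeasurePreserving (E i) (PX i) (PZ.prod (PN i)) := ⟨hE i, hlat i⟩
    exact h1.prod (MeasurePreserving.id π')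
  -- a.e. equality of the stated map with G ∘ φ
  have hae : (fun p : X i × (∀ j : {j : Fin k // j ≠ i}, N j) =>
        fun j : Fin k =>
          if h : j = i then cast (congrArg X h.symm) p.1
          else D j ((E i p.1).1, p.2 ⟨j, h⟩))
      =ᵐ[(PX i).prod π'] G ∘ φ := by
    have hfst : ∀ᵐ p : X i × (∀ j : {j : Fin k // j ≠ i}, N j) ∂(PX i).prod π',
        D i (E i p.1) = p.1 :=
      Measure.quasiMeasurePreserving_fst.tendsto_ae.eventually (hrec i)
    filter_upwards [hfst] with p hp
    funext j
    by_cases h : j = i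
    · subst h; simp [hG, hφ, hp]
    · simp [hG, hφ, h]
  -- reassociation
  have hψMP : MeasurePreserving
      (fun p : (Z × N i) × (∀ j : {j : Fin k // j ≠ i}, N j) =>
        ((p.1.1, fun j : Fin k =>
          if h : j = i then cast (congrArg N h.symm) p.1.2 else p.2 ⟨j, h⟩) : Z × ∀ j, N j))
      ((PZ.prod (PN i)).prod π') (PZ.prod (Measure.pi fun j => PN j)) := by
    have h1 := measurePreserving_prodAssoc PZ (PN i) π'
    have h2 := (MeasurePreserving.id PZ).prod (split_measurePreserving N PN i)
    exact h2.comp h1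
  have hGH : G = H ∘ (fun p : (Z × N i) × (∀ j : {j : Fin k // j ≠ i}, N j) =>
        ((p.1.1, fun j : Fin k =>
          if h : j = i then cast (congrArg N h.symm) p.1.2 else p.2 ⟨j, h⟩) : Z × ∀ j, N j)) := by
    funext p
    funext j
    by_cases h : j = i
    · subst h; simp [hG, hH]
    · simp [hG, hH, h]
  calc Measure.map
        (fun p : X i × (∀ j : {j : Fin k // j ≠ i}, N j) =>
          fun j : Fin k =>
            if h : j = i then cast (congrArg X h.symm) p.1
            else D j ((E i p.1).1, p.2 ⟨j, h⟩))
        ((PX i).prod π')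
      = Measure.map (G ∘ φ) ((PX i).prod π') := Measure.map_congr hae
    _ = Measure.map G ((PZ.prod (PN i)).prod π') := by
        rw [← Measure.map_map hGmeas hφMP.measurable, hφMP.map_eq]
    _ = Measure.map H (PZ.prod (Measure.pi fun j => PN j)) := by
        rw [hGH, ← Measure.map_map hHmeas hψMP.measurable, hψMP.map_eq]
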